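/- Let θ > p ≥ 1 be real numbers and L(s) = s⁴ − (16pθ(p+1)/(θ+1)) s² + (16pθ(p+1)(p+θ+2)/(θ+1)²) s − 16pθ(p+1)²/(θ+1)². Then L has a real root strictly greater than p+1; in particular its largest real root s₀ satisfies s₀ > p + 1. -/

import Mathlib

theorem stmt_5 (p θ : ℝ) (hp : 1 ≤ p) (hθ : p < θ)
    (L : ℝ → ℝ)
    (hL : ∀ s, L s = s ^ 4 - (16 * p * θ * (p + 1) / (θ + 1)) * s ^ 2
      + (16 * p * θ * (p + 1) * (p + θ + 2) / (θ + 1) ^ 2) * s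
      - 16 * p * θ * (p + 1) ^ 2 / (θ + 1) ^ 2) :
    (∃ s, s > p + 1 ∧ L s = 0) ∧
    (∀ s₀, IsGreatest {s : ℝ | L s = 0} s₀ → s₀ > p + 1) := by
  have hθ1 : 1 < θ := lt_of_le_of_lt hp hθ
  have ht : (0:ℝ) < θ + 1 := by linarith
  have ht2 : (0:ℝ) < (θ + 1) ^ 2 := by positivity
  set A : ℝ := 16 * p * θ * (p + 1) / (θ + 1) with hAdef
  set B : ℝ := 16 * p * θ * (p + 1) * (p + θ + 2) / (θ + 1) ^ 2 with hBdef
  set C : ℝ := 16 * p * θ * (p + 1) ^ 2 / (θ + 1) ^ 2 with hCdef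
  have hA : 0 < A := by
    rw [hAdef]; positivity
  have hB : 0 < B := by
    rw [hBdef]; positivity
  have hC : 0 < C := by
    rw [hCdef]; positivity
  -- L(p+1) < 0
  have hneg : L (p + 1) < 0 := by
    rw [hL, hAdef, hBdef, hCdef]
    have key : (p + 1) ^ 4 * (θ + 1) ^ 2
        - 16 * p * θ * (p + 1) * (p + 1) ^ 2 * (θ + 1)
        + 16 * p * θ * (p + 1) * (p + θ + 2) * (p + 1)
        - 16 * p * θ * (p + 1) ^ 2 < 0 := by
      have h4 : (p + 1) * (θ + 1) < 4 * (p * θ) := by nlinarith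
      have hpos : 0 < (p + 1) * (θ + 1) := by positivity
      have h5 : ((p+1)*(θ+1))^2 < (4*(p*θ))^2 := by nlinarith
      have h6 : (p+1)^2 * (((p+1)*(θ+1))^2 - (4*(p*θ))^2) < 0 :=
        mul_neg_of_pos_of_neg (by positivity) (by linarith)
      nlinarith [h6]
    have expand : ((p + 1):ℝ) ^ 4 - 16 * p * θ * (p + 1) / (θ + 1) * (p + 1) ^ 2
        + 16 * p * θ * (p + 1) * (p + θ + 2) / (θ + 1) ^ 2 * (p + 1)
        - 16 * p * θ * (p + 1) ^ 2 / (θ + 1) ^ 2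
        = ((p + 1) ^ 4 * (θ + 1) ^ 2
        - 16 * p * θ * (p + 1) * (p + 1) ^ 2 * (θ + 1)
        + 16 * p * θ * (p + 1) * (p + θ + 2) * (p + 1)
        - 16 * p * θ * (p + 1) ^ 2) / (θ + 1) ^ 2 := by
      field_simp
    calc ((p + 1):ℝ) ^ 4 - 16 * p * θ * (p + 1) / (θ + 1) * (p + 1) ^ 2
        + 16 * p * θ * (p + 1) * (p + θ + 2) / (θ + 1) ^ 2 * (p + 1)
        - 16 * p * θ * (p + 1) ^ 2 / (θ + 1) ^ 2
        = ((p + 1) ^ 4 * (θ + 1) ^ 2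
          - 16 * p * θ * (p + 1) * (p + 1) ^ 2 * (θ + 1)
          + 16 * p * θ * (p + 1) * (p + θ + 2) * (p + 1)
          - 16 * p * θ * (p + 1) ^ 2) / (θ + 1) ^ 2 := expand
      _ < 0 := div_neg_of_neg_of_pos key ht2
  -- choose M large with L M > 0
  set M : ℝ := A + C + p + 2 with hMdef
  have hM1 : p + 1 < M := by
    rw [hMdef]; linarith
  have hM3 : 3 ≤ M := by rw [hMdef]; linarith
  have hMAC : A + C + 2 ≤ M := by rw [hMdef]; linarith
  have hpos : 0 < L M := by
    rw [hL]
    have hBM : 0 < B * M := by positivity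
    have hM2 : M ^ 2 ≥ 3 * M := by nlinarith
    have h1 : M ^ 4 = M ^ 2 * M ^ 2 := by ring
    nlinarith [mul_pos hA (mul_pos (by linarith : (0:ℝ) < M) (by linarith : (0:ℝ) < M)),
      mul_le_mul_of_nonneg_left hMAC (by positivity : (0:ℝ) ≤ M ^ 2)]
  -- continuity
  have hcont : ContinuousOn L (Set.Icc (p + 1) M) := by
    have : L = fun s => s ^ 4 - A * s ^ 2 + B * s - C := funext hL
    rw [this]
    fun_prop
  have hIVT := intermediate_value_Icc (le_of_lt hM1) hcont
  have h0mem : (0:ℝ) ∈ Set.Icc (L (p + 1)) (L M) := ⟨le_of_lt hneg, le_of_lt hpos⟩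
  obtain ⟨s, hs_mem, hs_eq⟩ := hIVT h0mem
  have hs_gt : p + 1 < s := by
    rcases lt_or_eq_of_le hs_mem.1 with h | h
    · exact h
    · exfalso; rw [← h] at hs_eq; rw [hs_eq] at hneg; exact lt_irrefl 0 hneg
  refine ⟨⟨s, hs_gt, hs_eq⟩, ?_⟩
  intro s₀ hgr
  have := hgr.2 hs_eq
  linarith
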